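/- Let 𝕋 = (ℝ/Lℤ)^d be the d-dimensional torus of side length L > 0 with its Haar measure, let W : 𝕋 → ℝ be bounded and measurable with w := ∫_𝕋 W dx, let μ ∈ ℝ, κ ∈ (0, 1/2), θ♯ > 0 with m₀/κ < θ♯, and let m₀ > 0 satisfy m₀ = e^{μ − w·m₀}. Assume that for every R ∈ L²(𝕋), ∫_{𝕋×𝕋} W(x−y) R(x) R(y) dx dy ≥ −(1/θ♯)·∫_𝕋 R² dx. Then the constant density m₀ is the unique minimizer of G_μ over B_κ: if N is measurable with κ·m₀ ≤ N(x) ≤ m₀/κ for all x and G_μ(N) ≤ G_μ(m₀), then N = m₀ almost everywhere. -/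

import Mathlib

open MeasureTheory

/-- bounded a.e.-strongly-measurable functions on a finite measure space are integrable -/
lemma integrable_of_bdd' {α : Type*} [MeasurableSpace α] {μ : Measure α} [IsFiniteMeasure μ]
    {f : α → ℝ} (hf : AEStronglyMeasurable f μ) {C : ℝ} (h : ∀ x, |f x| ≤ C) :
    Integrable f μ :=
  memLp_one_iff_integrable.mp (MemLp.of_bound hf C
    (Filter.Eventually.of_forall (fun x => by simpa [Real.norm_eq_abs] using h x)))

instance piNegInv (d : ℕ) (L : ℝ) [Fact (0 < L)] :
    (volume : Measure (Fin d → AddCircle L)).IsNegInvariant := by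
  constructor
  have h : MeasurePreserving (fun (f : Fin d → AddCircle L) (i : Fin d) => -(f i))
      volume volume :=
    measurePreserving_pi _ _ (fun _ => Measure.measurePreserving_neg volume)
  have he : (fun (f : Fin d → AddCircle L) (i : Fin d) => -(f i))
      = (Neg.neg : (Fin d → AddCircle L) → _) := rfl
  rw [Measure.neg, ← he, h.map_eq]

/-- Quantitative strict convexity of `t ↦ t log t` on `[κ m₀, m₀ / κ]`. -/
lemma entropy_pointwise (κ m₀ : ℝ) (hκ0 : 0 < κ) (hκ1 : κ ≤ 1) (hm₀ : 0 < m₀) :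
    ∀ t ∈ Set.Icc (κ * m₀) (m₀ / κ),
      m₀ * Real.log m₀ + (Real.log m₀ + 1) * (t - m₀) + (κ / (2 * m₀)) * (t - m₀) ^ 2
        ≤ t * Real.log t := by
  set F : ℝ → ℝ := fun t => t * Real.log t - (Real.log m₀ + 1) * t - (κ / (2 * m₀)) * (t - m₀) ^ 2
    with hF
  have hmem : m₀ ∈ Set.Icc (κ * m₀) (m₀ / κ) := by
    constructor
    · nlinarith
    · rw [le_div_iff₀ hκ0]; nlinarith
  have hder : ∀ x : ℝ, 0 < x → HasDerivAt F
      (Real.log x - Real.log m₀ - (κ / m₀) * (x - m₀)) x := by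
    intro x hx
    have h1 : HasDerivAt (fun t : ℝ => t * Real.log t) (Real.log x + 1) x :=
      Real.hasDerivAt_mul_log hx.ne'
    have h2 : HasDerivAt (fun t : ℝ => (Real.log m₀ + 1) * t) (Real.log m₀ + 1) x := by
      simpa using (hasDerivAt_id x).const_mul (Real.log m₀ + 1)
    have h3 : HasDerivAt (fun t : ℝ => (κ / (2 * m₀)) * (t - m₀) ^ 2)
        ((κ / (2 * m₀)) * (2 * (x - m₀))) x := by
      have : HasDerivAt (fun t : ℝ => (t - m₀) ^ 2) (2 * (x - m₀)) x := by
        simpa using (((hasDerivAt_id x).sub_const m₀).fun_pow 2)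
      simpa using this.const_mul (κ / (2 * m₀))
    have := (h1.sub h2).sub h3
    exact this.congr_deriv (by ring)
  have hcont : ∀ {D : Set ℝ}, (∀ x ∈ D, 0 < x) → ContinuousOn F D := by
    intro D hD x hx
    exact ((hder x (hD x hx)).continuousAt).continuousWithinAt
  have hpos_left : ∀ x ∈ Set.Icc (κ * m₀) m₀, 0 < x :=
    fun x hx => lt_of_lt_of_le (by positivity) hx.1
  have hpos_right : ∀ x ∈ Set.Icc m₀ (m₀ / κ), 0 < x := fun x hx => lt_of_lt_of_le hm₀ hx.1
  have hanti : AntitoneOn F (Set.Icc (κ * m₀) m₀) := by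
    apply antitoneOn_of_deriv_nonpos (convex_Icc _ _) (hcont hpos_left)
    · intro x hx
      rw [interior_Icc] at hx
      exact ((hder x (lt_of_lt_of_le (by positivity) hx.1.le)).differentiableAt).differentiableWithinAt
    · intro x hx
      rw [interior_Icc] at hx
      have hx0 : 0 < x := lt_of_lt_of_le (by positivity) hx.1.le
      rw [(hder x hx0).deriv]
      have hlog : Real.log x - Real.log m₀ ≤ x / m₀ - 1 := by
        rw [← Real.log_div hx0.ne' hm₀.ne']
        exact Real.log_le_sub_one_of_pos (by positivity)
      have hnum : x - m₀ ≤ κ * (x - m₀) := by nlinarith [hx.2]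
      have hdiv := mul_le_mul_of_nonneg_right hnum (inv_nonneg.mpr hm₀.le)
      have hlog2 : Real.log x - Real.log m₀ ≤ (x - m₀) * m₀⁻¹ := by
        have e2 : x / m₀ - 1 = (x - m₀) * m₀⁻¹ := by field_simp
        linarith [e2 ▸ hlog]
      have e1 : κ / m₀ * (x - m₀) = κ * (x - m₀) * m₀⁻¹ := by ring
      linarith [e1.le, e1.ge]
  have hmono : MonotoneOn F (Set.Icc m₀ (m₀ / κ)) := by
    apply monotoneOn_of_deriv_nonneg (convex_Icc _ _) (hcont hpos_right)
    · intro x hx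
      rw [interior_Icc] at hx
      exact ((hder x (lt_of_lt_of_le hm₀ hx.1.le)).differentiableAt).differentiableWithinAt
    · intro x hx
      rw [interior_Icc] at hx
      have hx0 : 0 < x := lt_of_lt_of_le hm₀ hx.1.le
      rw [(hder x hx0).deriv]
      have hlog : 1 - m₀ / x ≤ Real.log x - Real.log m₀ := by
        have := Real.log_le_sub_one_of_pos (show (0:ℝ) < m₀ / x by positivity)
        rw [Real.log_div hm₀.ne' hx0.ne'] at this
        linarith
      have hκx : x * κ ≤ m₀ := (le_div_iff₀ hκ0).mp hx.2.le
      have hk : κ / m₀ ≤ x⁻¹ := by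
        rw [div_le_iff₀ hm₀, inv_mul_eq_div, le_div_iff₀ hx0]
        linarith
      have hmul := mul_le_mul_of_nonneg_right hk (show 0 ≤ x - m₀ by linarith [hx.1])
      have e2 : 1 - m₀ / x = x⁻¹ * (x - m₀) := by field_simp
      linarith [e2.le, e2.ge]
  intro t ht
  have key : F m₀ ≤ F t := by
    rcases le_total t m₀ with h | h
    · exact hanti ⟨ht.1, h⟩ ⟨hmem.1, le_refl _⟩ h
    · exact hmono ⟨le_refl _, hmem.2⟩ ⟨h, ht.2⟩ h
  simp only [hF] at key
  nlinarith [key]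

/-- The grand canonical free energy
G_μ(N) = ∫ (N log N − (1+μ) N) dx + (1/2) ∫∫ W(x−y) N(x) N(y) dx dy
on the d-dimensional torus of side length L. -/
noncomputable def Gmu {d : ℕ} {L : ℝ} [Fact (0 < L)]
    (W : (Fin d → AddCircle L) → ℝ) (μ : ℝ) (N : (Fin d → AddCircle L) → ℝ) : ℝ :=
  (∫ x, (N x * Real.log (N x) - (1 + μ) * N x)) +
    (1 / 2) * ∫ x, ∫ y, W (x - y) * N x * N y

set_option maxHeartbeats 1000000 in
/-- The uniqueness assertion of Proposition 4.2: under the Fourier-type lower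
bound −1/θ♯ on the quadratic form of W with m₀/κ < θ♯ and the Kirkwood–Monroe
relation m₀ = e^{μ − w·m₀}, the constant density m₀ is the unique minimizer of
G_μ over B_κ. -/
theorem uniform_state_unique_minimizer (d : ℕ) (L : ℝ) [Fact (0 < L)]
    (W : (Fin d → AddCircle L) → ℝ) (hWmeas : Measurable W)
    (hWbdd : ∃ C : ℝ, ∀ z, |W z| ≤ C)
    (μ κ θ m₀ : ℝ) (hκ : κ ∈ Set.Ioo (0 : ℝ) (1 / 2)) (hθ : 0 < θ) (hm₀ : 0 < m₀)
    (hmκθ : m₀ / κ < θ)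
    (hKM : m₀ = Real.exp (μ - (∫ x, W x) * m₀))
    (hW : ∀ R : (Fin d → AddCircle L) → ℝ, MemLp R 2 volume →
      (∫ x, ∫ y, W (x - y) * R x * R y) ≥ -(1 / θ) * ∫ x, (R x) ^ 2)
    (N : (Fin d → AddCircle L) → ℝ) (hNmeas : Measurable N)
    (hNbd : ∀ x, κ * m₀ ≤ N x ∧ N x ≤ m₀ / κ)
    (hmin : Gmu W μ N ≤ Gmu W μ (fun _ => m₀)) :
    N =ᵐ[volume] (fun _ => m₀) := by
  obtain ⟨C, hC⟩ := hWbdd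
  obtain ⟨hκ0, hκh⟩ := hκ
  have hκ1 : κ ≤ 1 := by linarith
  have hC0 : 0 ≤ C := le_trans (abs_nonneg _) (hC 0)
  set w : ℝ := ∫ x, W x with hw
  -- basic positivity
  have hlogm₀ : Real.log m₀ = μ - w * m₀ := by
    have h := congrArg Real.log hKM
    rwa [Real.log_exp] at h
  set R : (Fin d → AddCircle L) → ℝ := fun x => N x - m₀ with hR
  have hRmeas : Measurable R := hNmeas.sub measurable_const
  set MR : ℝ := m₀ / κ + m₀ with hMR
  have hMR0 : 0 < MR := by positivity
  have hNabs : ∀ x, |N x| ≤ m₀ / κ := by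
    intro x
    rw [abs_le]
    refine ⟨?_, (hNbd x).2⟩
    have hpos : (0:ℝ) < m₀ / κ := by positivity
    nlinarith [(hNbd x).1, mul_pos hκ0 hm₀]
  have hRabs : ∀ x, |R x| ≤ MR := by
    intro x
    have h1 := (hNbd x).1
    have h2 := (hNbd x).2
    rw [abs_le]
    constructor <;> simp only [hR, hMR] <;> nlinarith
  set V : ℝ := (volume (Set.univ : Set (Fin d → AddCircle L))).toReal with hV
  have hWsub : Measurable
      (fun p : (Fin d → AddCircle L) × (Fin d → AddCircle L) => W (p.1 - p.2)) :=
    hWmeas.comp (measurable_fst.sub measurable_snd)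
  -- inner convolution with R
  set hRc : (Fin d → AddCircle L) → ℝ := fun x => ∫ y, W (x - y) * R y with hhRc
  have hRcmeas : StronglyMeasurable hRc :=
    (hWsub.mul (hRmeas.comp measurable_snd)).stronglyMeasurable.integral_prod_right'
  have hRcbd : ∀ x, |hRc x| ≤ C * MR * V := by
    intro x
    rw [← Real.norm_eq_abs]
    calc ‖∫ y, W (x - y) * R y‖ ≤ (C * MR) * V := by
          apply norm_integral_le_of_norm_le_const
          filter_upwards with y
          rw [Real.norm_eq_abs, abs_mul]
          exact mul_le_mul (hC _) (hRabs _) (abs_nonneg _) hC0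
      _ = C * MR * V := by ring
  -- inner integral of W alone
  have hIW : ∀ x : Fin d → AddCircle L, (∫ y, W (x - y)) = w :=
    fun x => integral_sub_left_eq_self W volume x
  -- Fubini : ∫ hRc = w * ∫ R
  have hswap : ∫ x, hRc x = w * ∫ y, R y := by
    simp only [hhRc]
    rw [integral_integral_swap]
    · have h1 : ∀ y : Fin d → AddCircle L,
          ∫ x, W (x - y) * R y = w * R y := by
        intro y
        rw [integral_mul_const, integral_sub_right_eq_self W y]
      simp_rw [h1]
      rw [integral_const_mul]
    · apply integrable_of_bdd'
        ((hWsub.mul (hRmeas.comp measurable_snd)).aestronglyMeasurable)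
        (C := C * MR)
      intro p
      rw [Pi.mul_apply, abs_mul]
      exact mul_le_mul (hC _) (hRabs _) (abs_nonneg _) hC0
  -- integrability facts
  have hRint : Integrable R volume := integrable_of_bdd' hRmeas.aestronglyMeasurable hRabs
  have hR2int : Integrable (fun x => (R x) ^ 2) volume := by
    apply integrable_of_bdd' ((hRmeas.pow_const 2).aestronglyMeasurable) (C := MR ^ 2)
    intro x
    rw [abs_pow]
    exact pow_le_pow_left₀ (abs_nonneg _) (hRabs x) 2
  have hRcint : Integrable hRc volume :=
    integrable_of_bdd' hRcmeas.aestronglyMeasurable hRcbd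
  have hRhRcint : Integrable (fun x => R x * hRc x) volume := by
    apply integrable_of_bdd' (hRmeas.aestronglyMeasurable.mul hRcmeas.aestronglyMeasurable)
      (C := MR * (C * MR * V))
    intro x
    simp only [Pi.mul_apply]
    rw [abs_mul]
    exact mul_le_mul (hRabs _) (hRcbd _) (abs_nonneg _) hMR0.le
  -- the quadratic form value
  have hQR : (∫ x, ∫ y, W (x - y) * R x * R y) = ∫ x, R x * hRc x := by
    congr 1
    funext x
    rw [← integral_const_mul]
    congr 1
    funext y
    ring
  -- Memℒp R 2
  have hRmem : MemLp R 2 volume :=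
    MemLp.of_bound hRmeas.aestronglyMeasurable MR
      (Filter.Eventually.of_forall (fun x => by simpa [Real.norm_eq_abs] using hRabs x))
  have hQRlow : (∫ x, R x * hRc x) ≥ -(1 / θ) * ∫ x, (R x) ^ 2 := hQR ▸ hW R hRmem
  -- expansion of the double integral for N
  have hNinner : ∀ x, (∫ y, W (x - y) * N x * N y)
      = R x * hRc x + m₀ * w * R x + m₀ * hRc x + m₀ ^ 2 * w := by
    intro x
    have h1 : (fun y => W (x - y) * N x * N y) = fun y => N x * (W (x - y) * N y) := by
      funext y; ring
    rw [h1, integral_const_mul]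
    have h2 : (fun y => W (x - y) * N y)
        = fun y => W (x - y) * R y + m₀ * W (x - y) := by
      funext y; simp only [hR]; ring
    have hint1 : Integrable (fun y => W (x - y) * R y) volume := by
      apply integrable_of_bdd'
        (((hWmeas.comp (measurable_const.sub measurable_id)).mul hRmeas).aestronglyMeasurable)
        (C := C * MR)
      intro y
      rw [Pi.mul_apply, abs_mul]
      exact mul_le_mul (hC _) (hRabs _) (abs_nonneg _) hC0
    have hint2 : Integrable (fun y => m₀ * W (x - y)) volume := by
      apply integrable_of_bdd'
        (((hWmeas.comp (measurable_const.sub measurable_id)).const_mul m₀).aestronglyMeasurable)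
        (C := m₀ * C)
      intro y
      rw [abs_mul, abs_of_pos hm₀]
      exact mul_le_mul_of_nonneg_left (hC _) hm₀.le
    rw [h2, integral_add hint1 hint2, integral_const_mul, hIW]
    have hNx : N x = R x + m₀ := by simp [hR]
    rw [hNx]
    simp only [hhRc]
    ring
  -- outer integral of the expansion
  have hQN : (∫ x, ∫ y, W (x - y) * N x * N y)
      = (∫ x, R x * hRc x) + 2 * m₀ * w * (∫ x, R x) + m₀ ^ 2 * w * V := by
    have h1 : (∫ x, ∫ y, W (x - y) * N x * N y)
        = ∫ x, (R x * hRc x + m₀ * w * R x + m₀ * hRc x + m₀ ^ 2 * w) := by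
      congr 1; funext x; exact hNinner x
    rw [h1]
    have i2 : Integrable (fun x => R x * hRc x + m₀ * w * R x) volume :=
      hRhRcint.add (hRint.const_mul (m₀ * w))
    have i3 : Integrable (fun x => R x * hRc x + m₀ * w * R x + m₀ * hRc x) volume :=
      i2.add (hRcint.const_mul m₀)
    rw [integral_add i3 (integrable_const _)]
    rw [integral_add i2 (hRcint.const_mul m₀)]
    rw [integral_add hRhRcint (hRint.const_mul (m₀ * w))]
    rw [integral_const_mul, integral_const_mul, hswap, integral_const]
    simp only [smul_eq_mul, hV, measureReal_def]
    ring
  -- double integral for the constant function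
  have hQm : (∫ x, ∫ y, W (x - y) * m₀ * m₀) = m₀ ^ 2 * w * V := by
    have h1 : ∀ x : Fin d → AddCircle L, (∫ y, W (x - y) * m₀ * m₀) = m₀ ^ 2 * w := by
      intro x
      have : (fun y => W (x - y) * m₀ * m₀) = fun y => (m₀ * m₀) * W (x - y) := by
        funext y; ring
      rw [this, integral_const_mul, hIW]
      ring
    simp_rw [h1]
    rw [integral_const]
    simp only [smul_eq_mul, hV, measureReal_def]
    ring
  -- entropy part
  have hElow : (∫ x, (N x * Real.log (N x) - (1 + μ) * N x))
      - (∫ _x : Fin d → AddCircle L, (m₀ * Real.log m₀ - (1 + μ) * m₀))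
      ≥ (κ / (2 * m₀)) * (∫ x, (R x) ^ 2) + (Real.log m₀ - μ) * (∫ x, R x) := by
    set DL : ℝ := |Real.log (κ * m₀)| + |Real.log (m₀ / κ)| with hDL
    have hlogbd : ∀ x, |Real.log (N x)| ≤ DL := by
      intro x
      have h1 : Real.log (κ * m₀) ≤ Real.log (N x) :=
        Real.log_le_log (by positivity) (hNbd x).1
      have h2 : Real.log (N x) ≤ Real.log (m₀ / κ) :=
        Real.log_le_log (lt_of_lt_of_le (by positivity) (hNbd x).1) (hNbd x).2
      rw [abs_le]
      constructor
      · calc -DL ≤ -|Real.log (κ * m₀)| := by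
              simp only [hDL, neg_add]
              nlinarith [abs_nonneg (Real.log (m₀ / κ))]
          _ ≤ Real.log (κ * m₀) := neg_abs_le _
          _ ≤ _ := h1
      · calc Real.log (N x) ≤ Real.log (m₀ / κ) := h2
          _ ≤ |Real.log (m₀ / κ)| := le_abs_self _
          _ ≤ DL := by simp only [hDL]; nlinarith [abs_nonneg (Real.log (κ * m₀))]
    have hent_meas : Measurable (fun x => N x * Real.log (N x) - (1 + μ) * N x) :=
      (hNmeas.mul (Real.measurable_log.comp hNmeas)).sub (hNmeas.const_mul _)
    have hEint : Integrable (fun x => N x * Real.log (N x) - (1 + μ) * N x) volume := by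
      apply integrable_of_bdd' hent_meas.aestronglyMeasurable
        (C := (m₀ / κ) * DL + |1 + μ| * (m₀ / κ))
      intro x
      calc |N x * Real.log (N x) - (1 + μ) * N x|
          ≤ |N x * Real.log (N x)| + |(1 + μ) * N x| := abs_sub _ _
        _ ≤ (m₀ / κ) * DL + |1 + μ| * (m₀ / κ) := by
            rw [abs_mul, abs_mul]
            exact add_le_add
              (mul_le_mul (hNabs x) (hlogbd x) (abs_nonneg _) (by positivity))
              (mul_le_mul_of_nonneg_left (hNabs x) (abs_nonneg _))
    have hcmpint : Integrable
        (fun x => (κ / (2 * m₀)) * (R x) ^ 2 + (Real.log m₀ - μ) * R x) volume :=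
      (hR2int.const_mul _).add (hRint.const_mul _)
    have hptwise : ∀ x, (κ / (2 * m₀)) * (R x) ^ 2 + (Real.log m₀ - μ) * R x
        ≤ (N x * Real.log (N x) - (1 + μ) * N x) - (m₀ * Real.log m₀ - (1 + μ) * m₀) := by
      intro x
      have := entropy_pointwise κ m₀ hκ0 hκ1 hm₀ (N x) ⟨(hNbd x).1, (hNbd x).2⟩
      simp only [hR]
      nlinarith [this]
    calc (κ / (2 * m₀)) * (∫ x, (R x) ^ 2) + (Real.log m₀ - μ) * (∫ x, R x)
        = ∫ x, ((κ / (2 * m₀)) * (R x) ^ 2 + (Real.log m₀ - μ) * R x) := by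
          rw [integral_add (hR2int.const_mul _) (hRint.const_mul _),
            integral_const_mul, integral_const_mul]
      _ ≤ ∫ x, ((N x * Real.log (N x) - (1 + μ) * N x) - (m₀ * Real.log m₀ - (1 + μ) * m₀)) := by
          apply integral_mono hcmpint (hEint.sub (integrable_const _)) hptwise
      _ = _ := by
          rw [integral_sub hEint (integrable_const _)]
  -- assemble
  set S : ℝ := ∫ x, (R x) ^ 2 with hS
  have hSnn : 0 ≤ S := integral_nonneg (fun x => sq_nonneg _)
  have hmin' : Gmu W μ N - Gmu W μ (fun _ => m₀) ≤ 0 := by linarith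
  have hexp : Gmu W μ N - Gmu W μ (fun _ => m₀)
      ≥ (κ / (2 * m₀)) * S - (1 / (2 * θ)) * S := by
    have e1 : Gmu W μ N - Gmu W μ (fun _ => m₀)
        = ((∫ x, (N x * Real.log (N x) - (1 + μ) * N x))
            - (∫ _x : Fin d → AddCircle L, (m₀ * Real.log m₀ - (1 + μ) * m₀)))
          + (1 / 2) * ((∫ x, R x * hRc x) + 2 * m₀ * w * (∫ x, R x)) := by
      simp only [Gmu]
      rw [hQN, hQm]
      ring
    have e2 : (Real.log m₀ - μ) * (∫ x, R x) + (1/2) * (2 * m₀ * w * (∫ x, R x)) = 0 := by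
      rw [hlogm₀]; ring
    have e3 : (1 / 2) * (∫ x, R x * hRc x) ≥ -(1 / (2 * θ)) * S := by
      have h2θ : -(1 / (2 * θ)) * S = (1 / 2) * (-(1 / θ) * S) := by ring
      linarith [hQRlow, h2θ.le, h2θ.ge]
    rw [e1]
    have := hElow
    nlinarith [hElow, e3, e2]
  have hcoef : 0 < κ / (2 * m₀) - 1 / (2 * θ) := by
    rw [sub_pos, div_lt_div_iff₀ (by positivity) (by positivity)]
    rw [div_lt_iff₀ hκ0] at hmκθ
    nlinarith
  have hS0 : S = 0 := by
    by_contra hne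
    have hSpos : 0 < S := lt_of_le_of_ne hSnn (Ne.symm hne)
    nlinarith [hexp, hmin', mul_pos hcoef hSpos]
  have := (integral_eq_zero_iff_of_nonneg (fun x => sq_nonneg (R x)) hR2int).mp hS0
  filter_upwards [this] with x hx
  have : (R x) ^ 2 = 0 := hx
  have : R x = 0 := by
    exact pow_eq_zero_iff (n := 2) (by norm_num) |>.mp this
  simp only [hR] at this
  linarith [this]
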